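/- For β ∈ (0,1] and the M-Wright function M_β(z) = Σ_{n≥0} (−z)^n/(n! Γ(−βn + 1 − β)), one has, for β = 1/2, M_{1/2}(z) = (1/√π)·exp(−z²/4) for all real z. -/

import Mathlib

open Real

lemma gamma_half_sub (k : ℕ) :
    Real.Gamma (1 / 2 - k) =
      (-1) ^ k * 4 ^ k * k.factorial / (2 * k).factorial * Real.sqrt Real.pi := by
  induction k with
  | zero => norm_num [Real.Gamma_one_half_eq]
  | succ k ih =>
    have hx : ((1:ℝ) / 2 - ((k : ℝ) + 1)) ≠ 0 := by
      have : (0:ℝ) ≤ (k:ℝ) := Nat.cast_nonneg k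
      intro h; linarith
    have h1 : ((1:ℝ) / 2 - ((k : ℝ) + 1)) + 1 = 1 / 2 - k := by ring
    have h2 := Real.Gamma_add_one hx
    rw [h1, ih] at h2
    have hΓ : Real.Gamma (1 / 2 - ((k : ℝ) + 1)) =
        ((-1) ^ k * 4 ^ k * k.factorial / (2 * k).factorial * Real.sqrt Real.pi) /
          (1 / 2 - ((k : ℝ) + 1)) := by
      rw [eq_div_iff hx, mul_comm]; exact h2.symm
    have hfac : ((2 * (k + 1)).factorial : ℝ) =
        (2 * (k:ℝ) + 2) * (2 * (k:ℝ) + 1) * (2 * k).factorial := by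
      have : 2 * (k + 1) = (2 * k + 1) + 1 := by ring
      rw [this, Nat.factorial_succ, Nat.factorial_succ]
      push_cast; ring
    have hne : ((2 * k).factorial : ℝ) ≠ 0 := by positivity
    push_cast [Nat.factorial_succ]
    rw [hΓ, hfac, div_eq_iff hx]
    field_simp
    ring

/-- The M-Wright function for `β = 1/2`:
`M_{1/2}(z) = (1/√π)·exp(−z²/4)` for all real `z`, where
`M_β(z) = ∑ (−z)ⁿ/(n! Γ(−βn + 1 − β))` (with `1/Γ = 0` at the poles of `Γ`). -/
theorem mWright_half (z : ℝ) :
    (∑' n : ℕ, (-z) ^ n / (n.factorial * Real.Gamma (-(1 / 2) * n + 1 - 1 / 2))) =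
      (1 / Real.sqrt Real.pi) * Real.exp (-z ^ 2 / 4) := by
  set f : ℕ → ℝ := fun n => (-z) ^ n / (n.factorial * Real.Gamma (-(1 / 2) * n + 1 - 1 / 2))
    with hf
  set g : ℕ → ℝ := fun k => (1 / Real.sqrt Real.pi) * ((-z ^ 2 / 4) ^ k / k.factorial) with hg
  have hodd : ∀ k : ℕ, f (2 * k + 1) = 0 := by
    intro k
    have h0 : (-(1 / 2) * ((2 * k + 1 : ℕ) : ℝ) + 1 - 1 / 2) = -(k : ℝ) := by push_cast; ring
    show (-z) ^ (2 * k + 1) / ((2 * k + 1).factorial *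
        Real.Gamma (-(1 / 2) * ((2 * k + 1 : ℕ) : ℝ) + 1 - 1 / 2)) = 0
    rw [h0, Real.Gamma_neg_nat_eq_zero, mul_zero, div_zero]
  have heven : ∀ k : ℕ, f (2 * k) = g k := by
    intro k
    have h1 : (-(1 / 2) * ((2 * k : ℕ) : ℝ) + 1 - 1 / 2) = 1 / 2 - k := by push_cast; ring
    have h2 : ((-z) ^ (2 * k) : ℝ) = (z ^ 2) ^ k := by rw [pow_mul]; ring_nf
    show (-z) ^ (2 * k) / ((2 * k).factorial *
        Real.Gamma (-(1 / 2) * ((2 * k : ℕ) : ℝ) + 1 - 1 / 2)) =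
      (1 / Real.sqrt Real.pi) * ((-z ^ 2 / 4) ^ k / k.factorial)
    rw [h1, h2, gamma_half_sub k]
    have hne : ((2 * k).factorial : ℝ) ≠ 0 := by positivity
    have hπ : Real.sqrt Real.pi ≠ 0 := by positivity
    have hk : (k.factorial : ℝ) ≠ 0 := by positivity
    have h3 : ((-z ^ 2 / 4 : ℝ)) ^ k = (-1) ^ k * (z ^ 2) ^ k / 4 ^ k := by
      rw [div_pow, neg_pow]
    rw [h3]
    have h4 : ((-1 : ℝ)) ^ k ≠ 0 := pow_ne_zero k (by norm_num)
    field_simp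
    have h5 : ((-1:ℝ)) ^ k * (-1) ^ k = 1 := by
      rw [← pow_add, ← two_mul, pow_mul]; norm_num
    linear_combination (-(z ^ 2) ^ k) * h5
  have key : (∑' n, f n) = ∑' k, g k := by
    refine tsum_eq_tsum_of_ne_zero_bij (fun x => 2 * (x : ℕ)) ?_ ?_ ?_
    · intro a b h
      simp only at h
      exact Subtype.ext (by omega)
    · intro n hn
      rcases Nat.even_or_odd n with ⟨k, hk⟩ | ⟨k, hk⟩
      · have hn2 : n = 2 * k := by omega
        refine ⟨⟨k, ?_⟩, by simp [hn2]⟩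
        intro hgk
        apply hn
        rw [hn2, heven k, hgk]
      · exact absurd (hk ▸ hodd k) hn
    · intro x; exact heven x
  rw [key, hg]
  rw [tsum_mul_left]
  congr 1
  rw [Real.exp_eq_exp_ℝ, NormedSpace.exp_eq_tsum_div]
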